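/- For every ε > 0, every β̄ > 0 and every γ̄ ∈ ℝ, the function u²(x₁,x₂) = −(C/2)(x₂² − x₂(1+ε²γ̄)/(1+εβ̄) − ε(β̄−εγ̄)/(1+εβ̄)) is the explicit solution of the second-order averaged wall-law problem with Wentzell boundary condition: it satisfies −Δu² = C on ℝ², u²(x₁,1) = 0 for all x₁, and u²(x₁,0) = ε β̄ ∂u²/∂x₂(x₁,0) + (ε²/2) γ̄ ∂²u²/∂x₂²(x₁,0) for all x₁. -/

import Mathlib

open Real

noncomputable section

/-- Partial derivative in the first variable. -/
def pd1 (u : ℝ → ℝ → ℝ) (x y : ℝ) : ℝ := deriv (fun t => u t y) x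

/-- Partial derivative in the second variable. -/
def pd2 (u : ℝ → ℝ → ℝ) (x y : ℝ) : ℝ := deriv (fun t => u x t) y

/-- Laplacian. -/
def lap (u : ℝ → ℝ → ℝ) (x y : ℝ) : ℝ := pd1 (pd1 u) x y + pd2 (pd2 u) x y

/-- The explicit second-order averaged wall-law solution. -/
def wallLaw2 (C ε βbar γbar : ℝ) (x₁ x₂ : ℝ) : ℝ :=
  -(C / 2) * (x₂ ^ 2 - x₂ * (1 + ε ^ 2 * γbar) / (1 + ε * βbar)
    - ε * (βbar - ε * γbar) / (1 + ε * βbar))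

lemma pd1_wallLaw2 (C ε βbar γbar x y : ℝ) :
    pd1 (wallLaw2 C ε βbar γbar) x y = 0 := by
  simp [pd1, wallLaw2]

lemma pd2_wallLaw2 (C ε βbar γbar x y : ℝ) :
    pd2 (wallLaw2 C ε βbar γbar) x y
      = -(C / 2) * (2 * y - (1 + ε ^ 2 * γbar) / (1 + ε * βbar)) := by
  unfold pd2 wallLaw2
  rw [show (fun t : ℝ => -(C / 2) * (t ^ 2 - t * (1 + ε ^ 2 * γbar) / (1 + ε * βbar)
      - ε * (βbar - ε * γbar) / (1 + ε * βbar)))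
      = fun t : ℝ => -(C / 2) * (t ^ 2 - t * ((1 + ε ^ 2 * γbar) / (1 + ε * βbar))
      - ε * (βbar - ε * γbar) / (1 + ε * βbar)) from by funext t; ring]
  rw [deriv_const_mul _ (by fun_prop)]
  rw [deriv_fun_sub (by fun_prop) (by fun_prop), deriv_fun_sub (by fun_prop) (by fun_prop)]
  simp [mul_comm]

lemma pd2_pd2_wallLaw2 (C ε βbar γbar x y : ℝ) :
    pd2 (pd2 (wallLaw2 C ε βbar γbar)) x y = -C := by
  show deriv (fun t : ℝ => pd2 (wallLaw2 C ε βbar γbar) x t) y = -C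
  rw [show (fun t : ℝ => pd2 (wallLaw2 C ε βbar γbar) x t)
      = fun t : ℝ => -(C / 2) * (2 * t - (1 + ε ^ 2 * γbar) / (1 + ε * βbar)) from by
    funext t; exact pd2_wallLaw2 ..]
  rw [deriv_const_mul _ (by fun_prop), deriv_fun_sub (by fun_prop) (by fun_prop),
    show (HMul.hMul (2:ℝ) : ℝ → ℝ) = fun t : ℝ => 2 * id t from rfl,
    deriv_const_mul _ (by fun_prop)]
  simp

/-- The explicit profile `u²` solves the second-order averaged wall-law problem with
Wentzell boundary condition: `−Δu² = C`, `u²(·,1) = 0`, and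
`u²(·,0) = ε β̄ ∂u²/∂x₂(·,0) + (ε²/2) γ̄ ∂²u²/∂x₂²(·,0)`. -/
theorem second_order_averaged_wall_law_explicit_solution
    (C ε βbar γbar : ℝ) (hC : 0 < C) (hε : 0 < ε) (hβ : 0 < βbar) :
    (∀ x₁ x₂ : ℝ, -(lap (wallLaw2 C ε βbar γbar) x₁ x₂) = C) ∧
    (∀ x₁ : ℝ, wallLaw2 C ε βbar γbar x₁ 1 = 0) ∧
    (∀ x₁ : ℝ, wallLaw2 C ε βbar γbar x₁ 0
      = ε * βbar * pd2 (wallLaw2 C ε βbar γbar) x₁ 0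
        + (ε ^ 2 / 2) * γbar * pd2 (pd2 (wallLaw2 C ε βbar γbar)) x₁ 0) := by
  have hden : (1 + ε * βbar) ≠ 0 := by positivity
  refine ⟨fun x₁ x₂ => ?_, fun x₁ => ?_, fun x₁ => ?_⟩
  · have h1 : pd1 (pd1 (wallLaw2 C ε βbar γbar)) x₁ x₂ = 0 := by
      show deriv (fun t : ℝ => pd1 (wallLaw2 C ε βbar γbar) t x₂) x₁ = 0
      rw [show (fun t : ℝ => pd1 (wallLaw2 C ε βbar γbar) t x₂) = fun _ : ℝ => 0 from by
        funext t; exact pd1_wallLaw2 ..]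
      simp
    rw [lap, h1, pd2_pd2_wallLaw2]; ring
  · unfold wallLaw2
    field_simp
    ring
  · rw [pd2_wallLaw2, pd2_pd2_wallLaw2]
    unfold wallLaw2
    field_simp
    ring

end
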